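/- Let R ⊆ I × ℝⁿ be compact with R_t := {x : (t,x) ∈ R} nonempty for every t ∈ I (an admissible region). Then there exist continuous functions h : I × ℝⁿ → ℝ and p = (p₁,p₂) : I × ℝⁿ → I × ℝⁿ such that: (i) R = h⁻¹((−∞, 0]); (ii) h is continuously differentiable on (I × ℝⁿ) \ R; (iii) p is bounded, p(t,x) = (t,x) for (t,x) ∈ R, and ⟨∇ₓh(t,x), p₂(t,x) − x⟩ ≤ 0 for all (t,x) ∈ (I × ℝⁿ) \ R. -/

import Mathlib

open Set

section Aux

/-- The radial profile function: vanishes on `(-∞, c]`, positive beyond, and equal to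
`u - c` when `u ≥ c + 1`. -/
noncomputable def auxPhi (c : ℝ) : ℝ → ℝ :=
  fun u => (u - c) * Real.smoothTransition (u - c)

lemma auxPhi_contDiff (c : ℝ) : ContDiff ℝ (⊤ : ℕ∞) (auxPhi c) :=
  (contDiff_id.sub contDiff_const).mul
    (Real.smoothTransition.contDiff.comp (contDiff_id.sub contDiff_const))

lemma auxPhi_zero {c u : ℝ} (h : u ≤ c) : auxPhi c u = 0 := by
  unfold auxPhi
  rw [Real.smoothTransition.zero_of_nonpos (by linarith), mul_zero]

lemma auxPhi_pos {c u : ℝ} (h : c < u) : 0 < auxPhi c u :=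
  mul_pos (by linarith) (Real.smoothTransition.pos_of_pos (by linarith))

lemma auxPhi_nonneg (c u : ℝ) : 0 ≤ auxPhi c u := by
  rcases le_or_gt u c with h | h
  · rw [auxPhi_zero h]
  · exact (auxPhi_pos h).le

lemma auxPhi_eq_of_le {c u : ℝ} (h : c + 1 ≤ u) : auxPhi c u = u - c := by
  unfold auxPhi
  rw [Real.smoothTransition.one_of_one_le (by linarith), mul_one]

end Aux

theorem admissible_region_has_admissible_pair
    (n : ℕ) (a b : ℝ) (hab : a < b)
    (R : Set (ℝ × EuclideanSpace ℝ (Fin n)))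
    (hRc : IsCompact R)
    (hRsub : R ⊆ Icc a b ×ˢ (univ : Set (EuclideanSpace ℝ (Fin n))))
    (hslice : ∀ t ∈ Icc a b, ∃ x, (t, x) ∈ R) :
    ∃ (h : ℝ × EuclideanSpace ℝ (Fin n) → ℝ)
      (p : ℝ × EuclideanSpace ℝ (Fin n) → ℝ × EuclideanSpace ℝ (Fin n)),
      Continuous h ∧ Continuous p ∧
      -- (H1)
      R = {z ∈ Icc a b ×ˢ (univ : Set (EuclideanSpace ℝ (Fin n))) | h z ≤ 0} ∧
      -- (H2)
      ContDiffOn ℝ 1 h ((Icc a b ×ˢ (univ : Set (EuclideanSpace ℝ (Fin n)))) \ R) ∧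
      -- (H3)
      Bornology.IsBounded (Set.range p) ∧
      (∀ z ∈ R, p z = z) ∧
      (∀ z ∈ (Icc a b ×ˢ (univ : Set (EuclideanSpace ℝ (Fin n)))) \ R,
        (inner ℝ (gradient (fun y => h (z.1, y)) z.2) ((p z).2 - z.2) : ℝ) ≤ 0) := by
  classical
  obtain ⟨M, hMR⟩ := (hRc.isBounded).subset_ball (0 : ℝ × EuclideanSpace ℝ (Fin n))
  set ρ : ℝ := max M (|a| + |b|) + 1 with hρdef
  have habs : (0:ℝ) ≤ |a| + |b| := by positivity
  have hρ1 : 1 ≤ ρ := by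
    have : (0:ℝ) ≤ max M (|a| + |b|) := le_max_of_le_right habs
    linarith
  have hρ0 : 0 < ρ := by linarith
  have hρa : |a| < ρ := by
    have : |a| ≤ max M (|a| + |b|) := le_max_of_le_right (by linarith [abs_nonneg b])
    linarith
  have hρb : |b| < ρ := by
    have : |b| ≤ max M (|a| + |b|) := le_max_of_le_right (by linarith [abs_nonneg a])
    linarith
  have hRρ : R ⊆ Metric.ball (0 : ℝ × EuclideanSpace ℝ (Fin n)) ρ := by
    refine hMR.trans (Metric.ball_subset_ball ?_)
    have : M ≤ max M (|a| + |b|) := le_max_left _ _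
    linarith
  -- the smooth function with support exactly `ball(0, 2ρ) \ R`
  have hUopen : IsOpen (Metric.ball (0 : ℝ × EuclideanSpace ℝ (Fin n)) (2*ρ) \ R) :=
    Metric.isOpen_ball.sdiff hRc.isClosed
  obtain ⟨f, hfsupp, hfsmooth, hfrange⟩ := hUopen.exists_contDiff_support_eq (n := ⊤)
  have hfnonneg : ∀ z, 0 ≤ f z := fun z => (hfrange ⟨z, rfl⟩).1
  -- the function h
  set c : ℝ := ρ ^ 2 with hc
  set H : ℝ × EuclideanSpace ℝ (Fin n) → ℝ :=
    fun z => f z + auxPhi c (‖z.2‖ ^ 2) with hH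
  have hHsmooth : ContDiff ℝ (⊤ : ℕ∞) H := by
    refine hfsmooth.add ?_
    exact (auxPhi_contDiff c).comp ((contDiff_norm_sq ℝ).comp contDiff_snd)
  -- facts about vanishing of f
  have hf_zero_of_notball : ∀ z : ℝ × EuclideanSpace ℝ (Fin n), 2*ρ ≤ ‖z‖ → f z = 0 := by
    intro z hz
    by_contra hne
    have hmem : z ∈ Metric.ball (0 : ℝ × EuclideanSpace ℝ (Fin n)) (2*ρ) \ R :=
      hfsupp ▸ Function.mem_support.2 hne
    have := hmem.1
    rw [Metric.mem_ball, dist_zero_right] at this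
    exact absurd this (not_lt.2 hz)
  have hf_zero_of_R : ∀ z ∈ R, f z = 0 := by
    intro z hz
    by_contra hne
    have hmem : z ∈ Metric.ball (0 : ℝ × EuclideanSpace ℝ (Fin n)) (2*ρ) \ R :=
      hfsupp ▸ Function.mem_support.2 hne
    exact hmem.2 hz
  -- the map p
  set p : ℝ × EuclideanSpace ℝ (Fin n) → ℝ × EuclideanSpace ℝ (Fin n) :=
    fun z => (max a (min z.1 b), (2*ρ / max (2*ρ) ‖z.2‖) • z.2) with hp
  have hdenom_pos : ∀ x : EuclideanSpace ℝ (Fin n), 0 < max (2*ρ) ‖x‖ := fun x =>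
    lt_max_of_lt_left (by linarith)
  refine ⟨H, p, hHsmooth.continuous, ?_, ?_, ?_, ?_, ?_, ?_⟩
  · -- continuity of p
    refine Continuous.prodMk (continuous_const.max (continuous_fst.min continuous_const)) ?_
    exact ((continuous_const.div (continuous_const.max continuous_snd.norm)
      (fun z => (hdenom_pos z.2).ne')).smul continuous_snd)
  · -- (H1)
    apply Subset.antisymm
    · intro z hz
      refine ⟨hRsub hz, ?_⟩
      have h1 : f z = 0 := hf_zero_of_R z hz
      have h2 : auxPhi c (‖z.2‖ ^ 2) = 0 := by
        apply auxPhi_zero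
        have hz2 : ‖z.2‖ ≤ ρ := by
          have := hRρ hz
          rw [Metric.mem_ball, dist_zero_right] at this
          exact (norm_snd_le z).trans this.le
        calc ‖z.2‖ ^ 2 ≤ ρ ^ 2 := by nlinarith [norm_nonneg z.2]
          _ = c := rfl
      simp [hH, h1, h2]
    · rintro z ⟨hz1, hz2⟩
      have hf0 : f z = 0 ∧ auxPhi c (‖z.2‖ ^ 2) = 0 := by
        have h1 := auxPhi_nonneg c (‖z.2‖ ^ 2)
        have h2 := hfnonneg z
        simp only [hH] at hz2
        constructor <;> linarith
      by_contra hzR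
      -- then z is outside the ball of radius 2ρ
      have hznotball : ¬ z ∈ Metric.ball (0 : ℝ × EuclideanSpace ℝ (Fin n)) (2*ρ) := by
        intro hball
        have hsupp : z ∈ Function.support f := hfsupp ▸ mem_diff_of_mem hball hzR
        exact hsupp hf0.1
      rw [Metric.mem_ball, dist_zero_right, not_lt] at hznotball
      have ht : |z.1| < ρ := by
        obtain ⟨⟨ha', hb'⟩, -⟩ := hz1
        rw [abs_lt]
        constructor
        · have : -|a| ≤ a := neg_abs_le a
          linarith
        · have : b ≤ |b| := le_abs_self b
          linarith
      have hx2 : 2*ρ ≤ ‖z.2‖ := by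
        have heq : ‖z‖ = max ‖z.1‖ ‖z.2‖ := rfl
        rw [heq] at hznotball
        rcases le_total ‖z.1‖ ‖z.2‖ with hcmp | hcmp
        · rwa [max_eq_right hcmp] at hznotball
        · rw [max_eq_left hcmp] at hznotball
          have : ‖z.1‖ < ρ := by rwa [Real.norm_eq_abs]
          linarith
      have hpos : 0 < auxPhi c (‖z.2‖ ^ 2) := by
        apply auxPhi_pos
        have h1 : ρ < ‖z.2‖ := by linarith
        calc c = ρ ^ 2 := rfl
          _ < ‖z.2‖ ^ 2 := by nlinarith
      linarith [hf0.2]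
  · -- (H2)
    exact (hHsmooth.of_le (by exact_mod_cast le_top)).contDiffOn
  · -- bounded range
    apply (Metric.isBounded_closedBall
      (x := (0 : ℝ × EuclideanSpace ℝ (Fin n))) (r := max (|a| + |b|) (2*ρ))).subset
    rintro w ⟨z, rfl⟩
    rw [Metric.mem_closedBall, dist_zero_right, Prod.norm_def]
    have h1 : ‖(p z).1‖ ≤ |a| + |b| := by
      simp only [hp, Real.norm_eq_abs]
      rw [abs_le]
      constructor
      · have h := le_max_left a (min z.1 b)
        have h2 : -|a| ≤ a := neg_abs_le a
        have h3 : (0:ℝ) ≤ |b| := abs_nonneg b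
        linarith [le_max_left a (min z.1 b)]
      · have h : max a (min z.1 b) ≤ max a b := max_le_max le_rfl (min_le_right _ _)
        have h2 : max a b ≤ |a| + |b| :=
          max_le (by linarith [le_abs_self a, abs_nonneg b])
            (by linarith [le_abs_self b, abs_nonneg a])
        exact h.trans h2
    have h2 : ‖(p z).2‖ ≤ 2*ρ := by
      simp only [hp, norm_smul, Real.norm_eq_abs]
      have hκpos : 0 ≤ 2*ρ / max (2*ρ) ‖z.2‖ := by positivity
      rw [abs_of_nonneg hκpos, div_mul_eq_mul_div, div_le_iff₀ (hdenom_pos z.2)]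
      have : ‖z.2‖ ≤ max (2*ρ) ‖z.2‖ := le_max_right _ _
      nlinarith
    exact max_le (h1.trans (le_max_left _ _)) (h2.trans (le_max_right _ _))
  · -- p fixes R
    intro z hz
    have hzb := hRρ hz
    rw [Metric.mem_ball, dist_zero_right] at hzb
    have hz1 := (hRsub hz).1
    have hx : ‖z.2‖ ≤ 2*ρ := (norm_snd_le z).trans (by linarith)
    have hmax : max (2*ρ) ‖z.2‖ = 2*ρ := max_eq_left hx
    simp only [hp]
    rw [hmax, div_self (by linarith : (2*ρ) ≠ 0), one_smul,
      min_eq_left hz1.2, max_eq_right hz1.1]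
  · -- the inner product condition
    rintro z ⟨hz1, hz2⟩
    set κ : ℝ := 2*ρ / max (2*ρ) ‖z.2‖ with hκ
    have hpz2 : (p z).2 - z.2 = (κ - 1) • z.2 := by
      simp [hp, sub_smul, one_smul]; rfl
    rcases le_or_gt ‖z.2‖ (2*ρ) with hle | hgt
    · have hone : κ = 1 := by
        rw [hκ, max_eq_left hle, div_self (by linarith : (2*ρ) ≠ 0)]
      rw [hpz2, hone, sub_self, zero_smul, inner_zero_right]
    · -- far away: the gradient is 2 • x
      have hgrad : gradient (fun y => H (z.1, y)) z.2 = (2:ℝ) • z.2 := by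
        have hEv : (fun y => H (z.1, y)) =ᶠ[nhds z.2]
            (fun y : EuclideanSpace ℝ (Fin n) => ‖y‖^2 - c) := by
          have hopen : IsOpen {y : EuclideanSpace ℝ (Fin n) | 2*ρ < ‖y‖} :=
            isOpen_lt continuous_const continuous_norm
          filter_upwards [hopen.mem_nhds hgt] with y hy
          have hf0 : f (z.1, y) = 0 := by
            apply hf_zero_of_notball
            exact le_trans (le_of_lt hy) (norm_snd_le (z.1, y))
          have hphi : auxPhi c (‖y‖^2) = ‖y‖^2 - c := by
            apply auxPhi_eq_of_le
            have h1 : 2*ρ < ‖y‖ := hy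
            have : c = ρ^2 := rfl
            nlinarith
          simp [hH, hf0, hphi]
        rw [hEv.gradient_eq]
        have hfd : HasFDerivAt (fun y : EuclideanSpace ℝ (Fin n) => ‖y‖^2 - c)
            ((2 • (innerSL ℝ z.2)) : EuclideanSpace ℝ (Fin n) →L[ℝ] ℝ) z.2 := by
          simpa using ((hasStrictFDerivAt_norm_sq z.2).hasFDerivAt.sub_const c)
        have hg : HasGradientAt (fun y : EuclideanSpace ℝ (Fin n) => ‖y‖^2 - c)
            ((2:ℝ) • z.2) z.2 := by
          rw [hasGradientAt_iff_hasFDerivAt]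
          refine hfd.congr_fderiv ?_
          ext v
          simp only [InnerProductSpace.toDual_apply_apply, real_inner_smul_left,
            ContinuousLinearMap.smul_apply, innerSL_apply_apply, smul_eq_mul]
          ring
        exact hg.gradient
      rw [hgrad, hpz2, real_inner_smul_left, real_inner_smul_right,
        real_inner_self_eq_norm_sq]
      have hκle : κ ≤ 1 := by
        rw [hκ, max_eq_right hgt.le, div_le_one (by linarith : (0:ℝ) < ‖z.2‖)]
        linarith
      nlinarith [sq_nonneg ‖z.2‖]
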